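/- arXiv:2208.08827 — 3 statements merged into one kernel-verified Lean document; each statement's English description precedes it below -/
import Mathlib

section
/- The function g(θ) = θ sin(θ)/(1 - cos(θ)) is decreasing on the interval (0, π/2], and its limit as θ → 0+ is 2. -/
open Real Filter

lemma one_sub_cos_pos {x : ℝ} (hx : 0 < x) (hx' : x < π) : 0 < 1 - Real.cos x := by
  have hs : 0 < Real.sin x := Real.sin_pos_of_pos_of_lt_pi hx hx'
  nlinarith [Real.sin_sq_add_cos_sq x, Real.neg_one_le_cos x]

/-- The function `g θ = θ sin θ / (1 - cos θ)` is (strictly) decreasing on `(0, π/2]`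
and tends to `2` as `θ → 0⁺`. -/
theorem stmt_0 :
    StrictAntiOn (fun θ : ℝ => θ * Real.sin θ / (1 - Real.cos θ)) (Set.Ioc 0 (Real.pi / 2)) ∧
    Filter.Tendsto (fun θ : ℝ => θ * Real.sin θ / (1 - Real.cos θ))
      (nhdsWithin 0 (Set.Ioi 0)) (nhds 2) := by
  have hpi : (0:ℝ) < π := Real.pi_pos
  constructor
  · apply strictAntiOn_of_deriv_neg (convex_Ioc 0 (π/2))
    · apply ContinuousOn.div
      · fun_prop
      · fun_prop
      · intro x hx
        have := one_sub_cos_pos hx.1 (lt_of_le_of_lt hx.2 (by linarith))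
        linarith
    · intro x hx
      rw [interior_Ioc] at hx
      have hx0 : 0 < x := hx.1
      have hxpi : x < π := hx.2.trans (by linarith)
      have hc : 0 < 1 - Real.cos x := one_sub_cos_pos hx0 hxpi
      have hd : HasDerivAt (fun θ : ℝ => θ * Real.sin θ / (1 - Real.cos θ))
          (((Real.sin x + x * Real.cos x) * (1 - Real.cos x) - (x * Real.sin x) * Real.sin x)
            / (1 - Real.cos x)^2) x := by
        have h1 : HasDerivAt (fun θ : ℝ => θ * Real.sin θ)
            (1 * Real.sin x + x * Real.cos x) x :=
          (hasDerivAt_id x).mul (Real.hasDerivAt_sin x)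
        have h2 : HasDerivAt (fun θ : ℝ => 1 - Real.cos θ) (Real.sin x) x := by
          have h0 := (hasDerivAt_const x (1:ℝ)).sub (Real.hasDerivAt_cos x)
          simp only [zero_sub, neg_neg] at h0
          exact h0
        have h3 := h1.div h2 (by linarith)
        rw [one_mul] at h3
        exact h3
      rw [hd.deriv]
      apply div_neg_of_neg_of_pos
      · have hsin : Real.sin x < x := Real.sin_lt hx0
        have hkey : (Real.sin x + x * Real.cos x) * (1 - Real.cos x) - (x * Real.sin x) * Real.sin x
            = (Real.sin x - x) * (1 - Real.cos x) := by
          have := Real.sin_sq_add_cos_sq x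
          ring_nf
          nlinarith [Real.sin_sq_add_cos_sq x]
        rw [hkey]
        exact mul_neg_of_neg_of_pos (by linarith) hc
      · positivity
  · have hsin : Tendsto (fun θ : ℝ => Real.sin θ / θ) (nhdsWithin 0 (Set.Ioi 0)) (nhds 1) := by
      have := Real.hasDerivAt_sin 0
      rw [hasDerivAt_iff_tendsto_slope] at this
      have h2 := this.mono_left (nhdsWithin_mono (0:ℝ) (fun x hx => ne_of_gt (Set.mem_Ioi.1 hx)))
      rw [Real.cos_zero] at h2
      apply h2.congr
      intro x
      simp [slope_def_field]
    have hinv : Tendsto (fun θ : ℝ => θ / Real.sin θ) (nhdsWithin 0 (Set.Ioi 0)) (nhds 1) := by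
      have := hsin.inv₀ one_ne_zero
      simpa using this
    have hcos : Tendsto (fun θ : ℝ => 1 + Real.cos θ) (nhdsWithin 0 (Set.Ioi 0)) (nhds 2) := by
      have : Tendsto (fun θ : ℝ => 1 + Real.cos θ) (nhds 0) (nhds (1 + Real.cos 0)) :=
        (continuous_const.add Real.continuous_cos).tendsto 0
      rw [Real.cos_zero] at this
      norm_num at this
      exact this.mono_left nhdsWithin_le_nhds
    have hmul := hinv.mul hcos
    rw [one_mul] at hmul
    apply hmul.congr'
    filter_upwards [Ioo_mem_nhdsGT_of_mem (by constructor <;> [rfl; exact hpi] : (0:ℝ) ∈ Set.Ico 0 π)] with x hx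
    have hx0 : 0 < x := hx.1
    have hxpi : x < π := hx.2
    have hs : 0 < Real.sin x := Real.sin_pos_of_pos_of_lt_pi hx0 hxpi
    have hc : 0 < 1 - Real.cos x := one_sub_cos_pos hx0 hxpi
    field_simp
    nlinarith [Real.sin_sq_add_cos_sq x]
end

section
/- For fixed δ > 0 and fixed real constants a, b, the integrals ∫_1^{πk/2} cos((j/k - 1)u)·g(u/k)/u du are bounded uniformly over all pairs of positive integers j, k with j/k - 1 ≥ δ, where g(θ) = θ sin θ/(1 - cos θ). -/
open Real intervalIntegral

/-- `g(θ) = θ sin θ / (1 - cos θ)`, extended continuously by `g(0) = 2`. -/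
noncomputable def gFun (θ : ℝ) : ℝ :=
  if θ = 0 then 2 else θ * Real.sin θ / (1 - Real.cos θ)

set_option maxHeartbeats 2000000 in
/-- For fixed `δ > 0`, the integrals `∫_1^{πk/2} cos((j/k - 1)u) g(u/k)/u du` are bounded
uniformly over pairs of positive integers `j, k` with `j/k - 1 ≥ δ`. -/
theorem stmt_6 (δ : ℝ) (hδ : 0 < δ) :
    ∃ C : ℝ, ∀ j k : ℕ, 0 < k → (1 + δ) * (k : ℝ) ≤ (j : ℝ) →
      |∫ u in (1 : ℝ)..(Real.pi * k / 2),
        Real.cos (((j : ℝ) / (k : ℝ) - 1) * u) * gFun (u / k) / u| ≤ C := by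
  refine ⟨π ^ 2 / δ + π ^ 2 / (2 * δ), ?_⟩
  intro j k hk hjk
  have hk0 : (0:ℝ) < k := Nat.cast_pos.2 hk
  have hk1 : (1:ℝ) ≤ k := Nat.one_le_cast.2 hk
  have hπ : (3:ℝ) < π := Real.pi_gt_three
  set l : ℝ := (j : ℝ) / k - 1 with hldef
  have hjk' : (1 + δ) ≤ (j:ℝ) / k := (le_div_iff₀ hk0).2 hjk
  have hδl : δ ≤ l := by simp only [hldef]; linarith
  have hl0 : 0 < l := lt_of_lt_of_le hδ hδl
  set T : ℝ := π * k / 2 with hTdef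
  have hT1 : (1:ℝ) ≤ T := by rw [hTdef]; nlinarith
  have huIcc : Set.uIcc (1:ℝ) T = Set.Icc 1 T := Set.uIcc_of_le hT1
  -- basic facts on the interval
  have hdom : ∀ x ∈ Set.Icc (1:ℝ) T, 0 < x ∧ x / k ≤ π / 2 ∧
      2 / π ^ 2 * (x / k) ^ 2 ≤ 1 - Real.cos (x / k) ∧ 0 < 1 - Real.cos (x / k) := by
    intro x hx
    obtain ⟨hx1, hxT⟩ := hx
    have hx0 : 0 < x := lt_of_lt_of_le one_pos hx1
    have hθ0 : 0 < x / k := div_pos hx0 hk0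
    have hθ2 : x / k ≤ π / 2 := by
      rw [div_le_div_iff₀ hk0 two_pos]; rw [hTdef] at hxT; linarith
    have habs : |x / k| ≤ π := by
      rw [abs_of_pos hθ0]; linarith
    have hcos := Real.cos_le_one_sub_mul_cos_sq habs
    refine ⟨hx0, hθ2, by linarith, ?_⟩
    have : 0 < 2 / π ^ 2 * (x / k) ^ 2 := by positivity
    linarith
  set f : ℝ → ℝ := fun x => Real.sin (x / k) / (k * (1 - Real.cos (x / k))) with hfdef
  set f' : ℝ → ℝ := fun x => -(1 / (k ^ 2 * (1 - Real.cos (x / k)))) with hf'def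
  -- rewrite the integrand
  have heq : ∫ u in (1:ℝ)..T, Real.cos (l * u) * gFun (u / k) / u
      = ∫ u in (1:ℝ)..T, f u * Real.cos (l * u) := by
    apply intervalIntegral.integral_congr
    intro x hx
    rw [huIcc] at hx
    obtain ⟨hx0, -, -, hc⟩ := hdom x hx
    have hθne : x / k ≠ 0 := ne_of_gt (div_pos hx0 hk0)
    simp only [gFun, if_neg hθne, hfdef]
    field_simp
  -- derivative of f
  have hderiv : ∀ x ∈ Set.uIcc (1:ℝ) T, HasDerivAt f (f' x) x := by
    intro x hx
    rw [huIcc] at hx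
    obtain ⟨hx0, -, -, hc⟩ := hdom x hx
    have h1 : HasDerivAt (fun y : ℝ => y / k) (1 / k) x := by
      simpa using (hasDerivAt_id x).div_const (k:ℝ)
    have hnum : HasDerivAt (fun y : ℝ => Real.sin (y / k)) (Real.cos (x / k) * (1 / k)) x :=
      h1.sin
    have hden : HasDerivAt (fun y : ℝ => (k:ℝ) * (1 - Real.cos (y / k)))
        ((k:ℝ) * (Real.sin (x / k) * (1 / k))) x := by
      have := (h1.cos).const_sub (1:ℝ)
      simpa [mul_comm, neg_neg] using (this.const_mul (k:ℝ))
    have hdne : (k:ℝ) * (1 - Real.cos (x / k)) ≠ 0 := by positivity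
    have := hnum.div hden hdne
    refine this.congr_deriv ?_
    symm
    have hs := Real.sin_sq_add_cos_sq (x / k)
    simp only [hf'def]
    rw [eq_div_iff (by positivity : ((k:ℝ) * (1 - Real.cos (x/k)))^2 ≠ 0)]
    field_simp
    linear_combination hs
  -- antiderivative of cos (l x)
  have hvderiv : ∀ x ∈ Set.uIcc (1:ℝ) T,
      HasDerivAt (fun y : ℝ => Real.sin (l * y) / l) (Real.cos (l * x)) x := by
    intro x _
    have h2 : HasDerivAt (fun y : ℝ => l * y) l x := by
      simpa using (hasDerivAt_id x).const_mul l
    have := (h2.sin).div_const l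
    refine this.congr_deriv ?_
    field_simp
  -- integrability
  have hcont_f' : ContinuousOn f' (Set.uIcc 1 T) := by
    rw [huIcc]
    apply ContinuousOn.neg
    apply ContinuousOn.div continuousOn_const
    · exact (continuousOn_const.mul ((continuousOn_const.sub
        ((Real.continuous_cos.comp (continuous_id.div_const _)).continuousOn))))
    · intro x hx
      obtain ⟨-, -, -, hc⟩ := hdom x hx
      positivity
  have hint1 : IntervalIntegrable f' MeasureTheory.volume 1 T :=
    hcont_f'.intervalIntegrable
  have hint2 : IntervalIntegrable (fun x => Real.cos (l * x)) MeasureTheory.volume 1 T :=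
    (Real.continuous_cos.comp (continuous_const.mul continuous_id)).intervalIntegrable _ _
  -- integration by parts
  have hipp := intervalIntegral.integral_mul_deriv_eq_deriv_mul hderiv hvderiv hint1 hint2
  -- bounds on f
  have hfb : ∀ x ∈ Set.Icc (1:ℝ) T, |f x| ≤ π ^ 2 / (2 * x) := by
    intro x hx
    obtain ⟨hx0, hθ2, hcb, hc⟩ := hdom x hx
    have hθ0 : 0 < x / k := div_pos hx0 hk0
    have hfnn : 0 ≤ f x := by
      apply div_nonneg _ (by positivity)
      exact Real.sin_nonneg_of_nonneg_of_le_pi hθ0.le (by linarith)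
    rw [abs_of_nonneg hfnn, hfdef]
    rw [div_le_div_iff₀ (by positivity) (by positivity)]
    have hsin : Real.sin (x / k) ≤ x / k := Real.sin_le hθ0.le
    have key : π ^ 2 * ((k:ℝ) * (2 / π ^ 2 * (x / k) ^ 2)) = 2 * x ^ 2 / (k:ℝ) := by
      field_simp
    have h2 : 2 * x ^ 2 / (k:ℝ) ≤ π ^ 2 * ((k:ℝ) * (1 - Real.cos (x / k))) := by
      rw [← key]
      exact mul_le_mul_of_nonneg_left (mul_le_mul_of_nonneg_left hcb hk0.le) (by positivity)
    calc Real.sin (x / k) * (2 * x) ≤ (x / k) * (2 * x) :=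
          mul_le_mul_of_nonneg_right hsin (by positivity)
      _ = 2 * x ^ 2 / (k:ℝ) := by field_simp
      _ ≤ π ^ 2 * ((k:ℝ) * (1 - Real.cos (x / k))) := h2
  -- bound on f'
  have hf'b : ∀ x ∈ Set.Icc (1:ℝ) T, |f' x| ≤ π ^ 2 / (2 * x ^ 2) := by
    intro x hx
    obtain ⟨hx0, hθ2, hcb, hc⟩ := hdom x hx
    have h1 : |f' x| = 1 / (k ^ 2 * (1 - Real.cos (x / k))) := by
      rw [hf'def, abs_neg, abs_of_nonneg (by positivity)]
    rw [h1, div_le_div_iff₀ (by positivity) (by positivity)]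
    have key : (k:ℝ) ^ 2 * (2 / π ^ 2 * (x / k) ^ 2) = 2 * x ^ 2 / π ^ 2 := by
      field_simp
    have := mul_le_mul_of_nonneg_left hcb (le_of_lt (by positivity : (0:ℝ) < (k:ℝ)^2))
    rw [key] at this
    have hπ0 : (0:ℝ) < π ^ 2 := by positivity
    calc 1 * (2 * x ^ 2) = π ^ 2 * (2 * x ^ 2 / π ^ 2) := by field_simp
      _ ≤ π ^ 2 * (k ^ 2 * (1 - Real.cos (x / k))) := by
          apply mul_le_mul_of_nonneg_left this hπ0.le
  -- bound the integrated term
  have hsb : ∀ y : ℝ, |Real.sin (l * y) / l| ≤ 1 / δ := by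
    intro y
    rw [abs_div, abs_of_pos hl0]
    apply div_le_div₀ (by positivity) (Real.abs_sin_le_one _) hδ (hδl)
  have hT_mem : T ∈ Set.Icc (1:ℝ) T := ⟨hT1, le_refl T⟩
  have h1_mem : (1:ℝ) ∈ Set.Icc (1:ℝ) T := ⟨le_refl 1, hT1⟩
  have hbT : |f T * (Real.sin (l * T) / l)| ≤ π ^ 2 / (2 * δ) := by
    rw [abs_mul]
    calc |f T| * |Real.sin (l * T) / l| ≤ (π ^ 2 / 2) * (1 / δ) := by
          apply mul_le_mul _ (hsb T) (abs_nonneg _) (by positivity)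
          calc |f T| ≤ π ^ 2 / (2 * T) := hfb T hT_mem
            _ ≤ π ^ 2 / 2 := by
                apply div_le_div_of_nonneg_left (by positivity) two_pos
                linarith
      _ = π ^ 2 / (2 * δ) := by field_simp
  have hb1 : |f 1 * (Real.sin (l * 1) / l)| ≤ π ^ 2 / (2 * δ) := by
    rw [abs_mul]
    calc |f 1| * |Real.sin (l * 1) / l| ≤ (π ^ 2 / 2) * (1 / δ) := by
          apply mul_le_mul _ (hsb 1) (abs_nonneg _) (by positivity)
          have := hfb 1 h1_mem
          simpa using this
      _ = π ^ 2 / (2 * δ) := by field_simp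
  -- bound the remaining integral
  have hbint : |∫ x in (1:ℝ)..T, f' x * (Real.sin (l * x) / l)|
      ≤ π ^ 2 / (2 * δ) := by
    have hg : IntervalIntegrable (fun x : ℝ => π ^ 2 / (2 * δ) * (x ^ 2)⁻¹)
        MeasureTheory.volume 1 T := by
      apply ContinuousOn.intervalIntegrable
      apply continuousOn_const.mul
      apply ContinuousOn.inv₀ (continuousOn_pow 2)
      intro x hx
      rw [huIcc] at hx
      have : (0:ℝ) < x := lt_of_lt_of_le one_pos hx.1
      positivity
    have hle := intervalIntegral.norm_integral_le_abs_of_norm_le (μ := MeasureTheory.volume)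
      (f := fun x => f' x * (Real.sin (l * x) / l))
      (g := fun x : ℝ => π ^ 2 / (2 * δ) * (x ^ 2)⁻¹) (a := 1) (b := T) ?_ hg
    · rw [Real.norm_eq_abs] at hle
      refine hle.trans ?_
      have hcalc : ∫ x in (1:ℝ)..T, π ^ 2 / (2 * δ) * (x ^ 2)⁻¹
          = π ^ 2 / (2 * δ) * (1 - T⁻¹) := by
        rw [intervalIntegral.integral_const_mul]
        have : ∫ x in (1:ℝ)..T, (x ^ 2)⁻¹ = -T⁻¹ - -(1:ℝ)⁻¹ := by
          apply intervalIntegral.integral_eq_sub_of_hasDerivAt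
            (f := fun y : ℝ => -y⁻¹) (f' := fun y : ℝ => (y ^ 2)⁻¹)
          · intro x hx
            rw [huIcc] at hx
            have hx0 : x ≠ 0 := by
              have : (0:ℝ) < x := lt_of_lt_of_le one_pos hx.1
              exact ne_of_gt this
            simpa using (hasDerivAt_inv hx0).fun_neg
          · apply ContinuousOn.intervalIntegrable
            apply ContinuousOn.inv₀ (continuousOn_pow 2)
            intro x hx
            rw [huIcc] at hx
            have : (0:ℝ) < x := lt_of_lt_of_le one_pos hx.1
            positivity
        rw [this]; ring
      rw [hcalc, abs_of_nonneg]
      · have hTinv : 0 < T⁻¹ := by positivity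
        have : (1 - T⁻¹) ≤ 1 := by linarith
        calc π ^ 2 / (2 * δ) * (1 - T⁻¹) ≤ π ^ 2 / (2 * δ) * 1 :=
              mul_le_mul_of_nonneg_left this (by positivity)
          _ = π ^ 2 / (2 * δ) := mul_one _
      · have hTinv : T⁻¹ ≤ 1 := by
          rw [inv_le_one_iff₀]; right; exact hT1
        have : 0 ≤ 1 - T⁻¹ := by linarith
        positivity
    · rw [MeasureTheory.ae_restrict_iff' measurableSet_uIoc]
      apply MeasureTheory.ae_of_all
      intro x hx
      have hx' : x ∈ Set.Icc (1:ℝ) T := by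
        rw [Set.uIoc_of_le hT1] at hx
        exact ⟨hx.1.le, hx.2⟩
      rw [Real.norm_eq_abs, abs_mul]
      calc |f' x| * |Real.sin (l * x) / l| ≤ (π ^ 2 / (2 * x ^ 2)) * (1 / δ) :=
            mul_le_mul (hf'b x hx') (hsb x) (abs_nonneg _) (by positivity)
        _ = π ^ 2 / (2 * δ) * (x ^ 2)⁻¹ := by
            have hx0 : (0:ℝ) < x := lt_of_lt_of_le one_pos hx'.1
            field_simp
  -- conclude
  rw [heq, hipp]
  calc |f T * (Real.sin (l * T) / l) - f 1 * (Real.sin (l * 1) / l)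
        - ∫ x in (1:ℝ)..T, f' x * (Real.sin (l * x) / l)|
      ≤ |f T * (Real.sin (l * T) / l)| + |f 1 * (Real.sin (l * 1) / l)|
        + |∫ x in (1:ℝ)..T, f' x * (Real.sin (l * x) / l)| := by
        apply (abs_sub _ _).trans
        apply add_le_add_left
        exact abs_sub _ _
    _ ≤ π ^ 2 / (2 * δ) + π ^ 2 / (2 * δ) + π ^ 2 / (2 * δ) := by
        exact add_le_add (add_le_add hbT hb1) hbint
    _ = π ^ 2 / δ + π ^ 2 / (2 * δ) := by field_simp; ring
end

section
/- Let (f_N) be a sequence of holomorphic functions on the right half-plane S = {z ∈ ℂ : Re z > 0} with |f_N(z)| ≤ 1 for all z ∈ S and all N, and suppose f_N(t) converges pointwise for every t ∈ (0,∞). Then there exists a holomorphic function f on S such that f_N → f uniformly on compact subsets of S. -/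
open Complex Filter Metric Set

/-- Pointwise Cauchy-ness from uniform Cauchy-ness on a set. -/
lemma vitali_aux_ptwise {f : ℕ → ℂ → ℂ} {s : Set ℂ}
    (h : UniformCauchySeqOn f atTop s) {x : ℂ} (hx : x ∈ s) :
    CauchySeq (fun N => f N x) := by
  rw [Metric.cauchySeq_iff]
  rw [Metric.uniformCauchySeqOn_iff] at h
  intro ε hε
  obtain ⟨N, hN⟩ := h ε hε
  exact ⟨N, fun m hm n hn => hN m hm n hn x hx⟩

/-- Key quantitative Vitali-type lemma: if `f N` are holomorphic on `ball c R`, bounded by `1`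
there, and converge pointwise along a sequence `t j ≠ c` tending to `c`, then they are
uniformly Cauchy on `closedBall c (R/12)`. -/
lemma vitali_key (f : ℕ → ℂ → ℂ) (c : ℂ) (R : ℝ) (hR0 : 0 < R) (hR1 : R ≤ 1)
    (holo : ∀ N, DifferentiableOn ℂ (f N) (ball c R))
    (bdd : ∀ N, ∀ z ∈ ball c R, ‖f N z‖ ≤ 1)
    (t : ℕ → ℂ) (htb : ∀ j, t j ∈ ball c (R / 2)) (htne : ∀ j, t j ≠ c)
    (htc : Tendsto t atTop (nhds c))
    (hconv : ∀ j, ∃ l, Tendsto (fun N => f N (t j)) atTop (nhds l)) :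
    UniformCauchySeqOn f atTop (closedBall c (R / 12)) := by
  set r : ℝ := R / 2 with hr_def
  have hr0 : 0 < r := by positivity
  have hr1 : r ≤ 1 / 2 := by simp only [hr_def]; linarith
  -- iterated difference quotients
  set g : ℕ → ℕ → ℂ → ℂ := fun k N => (fun h => dslope h c)^[k] (f N) with hg_def
  have g0 : ∀ N, g 0 N = f N := fun N => rfl
  have gsucc : ∀ k N, g (k + 1) N = dslope (g k N) c := fun k N =>
    Function.iterate_succ_apply' _ _ _
  -- bounds
  set M : ℕ → ℝ := fun k => Nat.rec 1 (fun _ m => (2 * m + 1) / r) k with hM_def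
  have Msucc : ∀ k, M (k + 1) = (2 * M k + 1) / r := fun k => rfl
  have hM1 : ∀ k, 1 ≤ M k := by
    intro k
    induction k with
    | zero => exact le_refl _
    | succ k ih =>
      rw [Msucc, le_div_iff₀ hr0]
      nlinarith
  have hdiff : ∀ k N, DifferentiableOn ℂ (g k N) (ball c r) := by
    intro k
    induction k with
    | zero => exact fun N => (holo N).mono (ball_subset_ball (by linarith))
    | succ k ih =>
      intro N
      rw [gsucc]
      exact (Complex.differentiableOn_dslope (ball_mem_nhds c hr0)).mpr (ih N)
  have hbdd : ∀ k N, ∀ z ∈ ball c r, ‖g k N z‖ ≤ M k := by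
    intro k
    induction k with
    | zero => exact fun N z hz => bdd N z (ball_subset_ball (by linarith) hz)
    | succ k ih =>
      intro N z hz
      rw [gsucc]
      have hmaps : MapsTo (g k N) (ball c r) (ball (g k N c) (2 * M k + 1)) := by
        intro x hx
        rw [mem_ball, dist_eq_norm]
        calc ‖g k N x - g k N c‖ ≤ ‖g k N x‖ + ‖g k N c‖ := norm_sub_le _ _
          _ ≤ M k + M k := add_le_add (ih N x hx) (ih N c (mem_ball_self hr0))
          _ < 2 * M k + 1 := by linarith
      have := Complex.norm_dslope_le_div_of_mapsTo_ball (hdiff k N) (hmaps.mono_right ball_subset_closedBall) hz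
      rw [Msucc]
      exact this
  -- uniform Lipschitz-type estimate at the center
  have hlip : ∀ k N, ∀ z ∈ ball c r, ‖g k N z - g k N c‖ ≤ (2 * M k + 1) / r * ‖z - c‖ := by
    intro k N z hz
    have hmaps : MapsTo (g k N) (ball c r) (ball (g k N c) (2 * M k + 1)) := by
      intro x hx
      rw [mem_ball, dist_eq_norm]
      calc ‖g k N x - g k N c‖ ≤ ‖g k N x‖ + ‖g k N c‖ := norm_sub_le _ _
        _ ≤ M k + M k := add_le_add (hbdd k N x hx) (hbdd k N c (mem_ball_self hr0))
        _ < 2 * M k + 1 := by linarith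
    have h1 := Complex.norm_dslope_le_div_of_mapsTo_ball (hdiff k N) (hmaps.mono_right ball_subset_closedBall) hz
    have h2 := sub_smul_dslope (g k N) c z
    rw [smul_eq_mul] at h2
    calc ‖g k N z - g k N c‖ = ‖(z - c) * dslope (g k N) c z‖ := by rw [h2]
      _ = ‖z - c‖ * ‖dslope (g k N) c z‖ := norm_mul _ _
      _ ≤ ‖z - c‖ * ((2 * M k + 1) / r) := by
          exact mul_le_mul_of_nonneg_left h1 (norm_nonneg _)
      _ = (2 * M k + 1) / r * ‖z - c‖ := mul_comm _ _
  -- convergence of all iterated difference quotients at the t j and at c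
  have center : ∀ k, (∀ j, ∃ l, Tendsto (fun N => g k N (t j)) atTop (nhds l)) →
      ∃ l, Tendsto (fun N => g k N c) atTop (nhds l) := by
    intro k hj
    apply cauchySeq_tendsto_of_complete
    rw [Metric.cauchySeq_iff]
    intro ε hε
    set L : ℝ := (2 * M k + 1) / r with hL_def
    have hL : 0 < L := by
      have := hM1 k
      positivity
    have h3L : 0 < ε / (3 * L) := by positivity
    obtain ⟨j, hj'⟩ := (htc.eventually (Metric.ball_mem_nhds c h3L)).exists
    obtain ⟨l, hl⟩ := hj j
    obtain ⟨N₀, hN₀⟩ := Metric.cauchySeq_iff.mp hl.cauchySeq (ε / 3) (by positivity)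
    refine ⟨N₀, fun m hm n hn => ?_⟩
    have hb : ∀ N, dist (g k N c) (g k N (t j)) ≤ L * ‖t j - c‖ := by
      intro N
      rw [dist_comm, dist_eq_norm]
      exact hlip k N (t j) (htb j)
    have htj : ‖t j - c‖ < ε / (3 * L) := by
      simpa [dist_eq_norm] using hj'
    have hb' : ∀ N, dist (g k N c) (g k N (t j)) < ε / 3 := by
      intro N
      calc dist (g k N c) (g k N (t j)) ≤ L * ‖t j - c‖ := hb N
        _ < L * (ε / (3 * L)) := mul_lt_mul_of_pos_left htj hL
        _ = ε / 3 := by field_simp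
    calc dist (g k m c) (g k n c)
        ≤ dist (g k m c) (g k m (t j)) + dist (g k m (t j)) (g k n (t j))
          + dist (g k n (t j)) (g k n c) := dist_triangle4 _ _ _ _
      _ < ε / 3 + ε / 3 + ε / 3 := by
          have h1 := hN₀ m hm n hn
          have h2 := hb' m
          have h3 := hb' n
          rw [dist_comm] at h3
          linarith
      _ = ε := by ring
  have hconvk : ∀ k, (∀ j, ∃ l, Tendsto (fun N => g k N (t j)) atTop (nhds l)) ∧
      (∃ l, Tendsto (fun N => g k N c) atTop (nhds l)) := by
    intro k
    induction k with
    | zero => exact ⟨fun j => hconv j, center 0 (fun j => hconv j)⟩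
    | succ k ih =>
      have hjs : ∀ j, ∃ l, Tendsto (fun N => g (k + 1) N (t j)) atTop (nhds l) := by
        intro j
        obtain ⟨lj, hlj⟩ := ih.1 j
        obtain ⟨lc, hlc⟩ := ih.2
        refine ⟨(t j - c)⁻¹ * (lj - lc), ?_⟩
        have heq : (fun N => g (k + 1) N (t j))
            = fun N => (t j - c)⁻¹ * (g k N (t j) - g k N c) := by
          funext N
          rw [gsucc, dslope_of_ne _ (htne j), slope_def_module, smul_eq_mul]
        rw [heq]
        exact (hlj.sub hlc).const_mul _
      exact ⟨hjs, center (k + 1) hjs⟩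
  -- finite Taylor-type expansion with exact remainder
  have hexp : ∀ K N z, f N z
      = (∑ k ∈ Finset.range K, g k N c * (z - c) ^ k) + g K N z * (z - c) ^ K := by
    intro K N z
    induction K with
    | zero => simp [g0]
    | succ K ih =>
      rw [Finset.sum_range_succ]
      have h := sub_smul_dslope (g K N) c z
      rw [smul_eq_mul] at h
      have hs : g (K + 1) N z = dslope (g K N) c z := by rw [gsucc]
      linear_combination ih - (z - c) ^ K * h - (z - c) ^ (K + 1) * hs
  -- geometric decay of the remainder bound
  have hrem : ∀ K, M K * (r / 6) ^ K ≤ (1 / 2 : ℝ) ^ K := by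
    intro K
    induction K with
    | zero => simp [show M 0 = (1:ℝ) from rfl]
    | succ K ih =>
      have e : M (K + 1) * (r / 6) ^ (K + 1) = (2 * M K + 1) / 6 * (r / 6) ^ K := by
        rw [Msucc, pow_succ]
        field_simp
      have h1 : (2 * M K + 1) / 6 ≤ M K / 2 := by
        have := hM1 K
        linarith
      have h2 : (0 : ℝ) ≤ (r / 6) ^ K := by positivity
      calc M (K + 1) * (r / 6) ^ (K + 1) = (2 * M K + 1) / 6 * (r / 6) ^ K := e
        _ ≤ M K / 2 * (r / 6) ^ K := mul_le_mul_of_nonneg_right h1 h2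
        _ = (M K * (r / 6) ^ K) / 2 := by ring
        _ ≤ (1 / 2 : ℝ) ^ K / 2 := by linarith
        _ = (1 / 2 : ℝ) ^ (K + 1) := by rw [pow_succ]; ring
  -- the uniform Cauchy estimate
  rw [Metric.uniformCauchySeqOn_iff]
  intro ε hε
  obtain ⟨K, hK⟩ : ∃ K : ℕ, (1 / 2 : ℝ) ^ K < ε / 4 :=
    exists_pow_lt_of_lt_one (by positivity) (by norm_num)
  -- the coefficient vector converges, hence is Cauchy
  set u : ℕ → (Fin K → ℂ) := fun N k => g k N c with hu_def
  have hu : CauchySeq u := by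
    have : ∃ l : Fin K → ℂ, Tendsto u atTop (nhds l) := by
      have h := fun k : Fin K => (hconvk k).2
      choose l hl using h
      exact ⟨l, tendsto_pi_nhds.mpr fun k => hl k⟩
    obtain ⟨l, hl⟩ := this
    exact hl.cauchySeq
  have hε' : 0 < ε / (4 * (K + 1)) := by positivity
  obtain ⟨N₀, hN₀⟩ := Metric.cauchySeq_iff.mp hu _ hε'
  refine ⟨N₀, fun m hm n hn z hz => ?_⟩
  have hzc : ‖z - c‖ ≤ r / 6 := by
    rw [mem_closedBall, dist_eq_norm] at hz
    calc ‖z - c‖ ≤ R / 12 := hz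
      _ = r / 6 := by rw [hr_def]; ring
  have hzr : z ∈ ball c r := by
    rw [mem_ball, dist_eq_norm]
    calc ‖z - c‖ ≤ r / 6 := hzc
      _ < r := by linarith
  have hz1 : ‖z - c‖ ≤ 1 := by
    calc ‖z - c‖ ≤ r / 6 := hzc
      _ ≤ 1 := by linarith
  have e1 := hexp K m z
  have e2 := hexp K n z
  have hd : f m z - f n z
      = (∑ k ∈ Finset.range K, (g k m c - g k n c) * (z - c) ^ k)
        + (g K m z * (z - c) ^ K - g K n z * (z - c) ^ K) := by
    rw [e1, e2]
    simp only [sub_mul]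
    rw [Finset.sum_sub_distrib]
    ring
  -- bound the coefficient part
  have hcoef : ∀ k ∈ Finset.range K,
      ‖(g k m c - g k n c) * (z - c) ^ k‖ ≤ ε / (4 * (K + 1)) := by
    intro k hk
    rw [Finset.mem_range] at hk
    have h1 : ‖g k m c - g k n c‖ ≤ ε / (4 * (K + 1)) := by
      have := hN₀ m hm n hn
      have h2 : dist (u m ⟨k, hk⟩) (u n ⟨k, hk⟩) ≤ dist (u m) (u n) := dist_le_pi_dist _ _ _
      have h3 : dist (u m ⟨k, hk⟩) (u n ⟨k, hk⟩) < ε / (4 * (K + 1)) := lt_of_le_of_lt h2 this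
      rw [dist_eq_norm] at h3
      exact h3.le
    calc ‖(g k m c - g k n c) * (z - c) ^ k‖ = ‖g k m c - g k n c‖ * ‖z - c‖ ^ k := by
          rw [norm_mul, norm_pow]
      _ ≤ (ε / (4 * (K + 1))) * 1 := by
          refine mul_le_mul h1 (pow_le_one₀ (norm_nonneg _) hz1) (by positivity) (by positivity)
      _ = ε / (4 * (K + 1)) := mul_one _
  have hsum : ‖∑ k ∈ Finset.range K, (g k m c - g k n c) * (z - c) ^ k‖ ≤ ε / 4 := by
    calc ‖∑ k ∈ Finset.range K, (g k m c - g k n c) * (z - c) ^ k‖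
        ≤ ∑ k ∈ Finset.range K, ‖(g k m c - g k n c) * (z - c) ^ k‖ := norm_sum_le _ _
      _ ≤ ∑ _k ∈ Finset.range K, ε / (4 * (K + 1)) := Finset.sum_le_sum hcoef
      _ = K * (ε / (4 * (K + 1))) := by
          rw [Finset.sum_const, Finset.card_range, nsmul_eq_mul]
      _ ≤ ε / 4 := by
          rw [mul_div_assoc', div_le_div_iff₀ (by positivity) (by norm_num)]
          nlinarith [Nat.cast_nonneg (α := ℝ) K, hε.le]
  have hremz : ∀ N, ‖g K N z * (z - c) ^ K‖ < ε / 4 := by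
    intro N
    calc ‖g K N z * (z - c) ^ K‖ = ‖g K N z‖ * ‖z - c‖ ^ K := by rw [norm_mul, norm_pow]
      _ ≤ M K * (r / 6) ^ K := by
          refine mul_le_mul (hbdd K N z hzr) (pow_le_pow_left₀ (norm_nonneg _) hzc K)
            (by positivity) (le_trans zero_le_one (hM1 K))
      _ ≤ (1 / 2 : ℝ) ^ K := hrem K
      _ < ε / 4 := hK
  rw [dist_eq_norm]
  calc ‖f m z - f n z‖
      = ‖(∑ k ∈ Finset.range K, (g k m c - g k n c) * (z - c) ^ k)
          + (g K m z * (z - c) ^ K - g K n z * (z - c) ^ K)‖ := by rw [hd]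
    _ ≤ ‖∑ k ∈ Finset.range K, (g k m c - g k n c) * (z - c) ^ k‖
          + ‖g K m z * (z - c) ^ K - g K n z * (z - c) ^ K‖ := norm_add_le _ _
    _ ≤ ‖∑ k ∈ Finset.range K, (g k m c - g k n c) * (z - c) ^ k‖
          + (‖g K m z * (z - c) ^ K‖ + ‖g K n z * (z - c) ^ K‖) := by
          have := norm_sub_le (g K m z * (z - c) ^ K) (g K n z * (z - c) ^ K)
          linarith
    _ < ε := by
          have h1 := hremz m
          have h2 := hremz n
          linarith

/-- Montel-type statement: if `(f_N)` are holomorphic on the right half-plane `S`,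
uniformly bounded by `1`, and converge pointwise on `(0,∞)`, then they converge
uniformly on compact subsets of `S` to some holomorphic function `f`. -/
theorem stmt_9 (f : ℕ → ℂ → ℂ)
    (holo : ∀ N, DifferentiableOn ℂ (f N) {z : ℂ | 0 < z.re})
    (bdd : ∀ N, ∀ z ∈ {z : ℂ | 0 < z.re}, ‖f N z‖ ≤ 1)
    (ptwise : ∀ t : ℝ, 0 < t → ∃ l : ℂ, Tendsto (fun N => f N (t : ℂ)) atTop (nhds l)) :
    ∃ F : ℂ → ℂ, DifferentiableOn ℂ F {z : ℂ | 0 < z.re} ∧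
      ∀ K : Set ℂ, K ⊆ {z : ℂ | 0 < z.re} → IsCompact K →
        TendstoUniformlyOn (fun N z => f N z) F atTop K := by
  set S : Set ℂ := {z : ℂ | 0 < z.re} with hS_def
  have hS_open : IsOpen S := isOpen_lt continuous_const Complex.continuous_re
  have hball : ∀ c : ℂ, 0 < c.re → ball c (min c.re 1) ⊆ S := by
    intro c hc z hz
    rw [mem_ball, dist_eq_norm] at hz
    have h1 : |(z - c).re| ≤ ‖z - c‖ := by
      exact Complex.abs_re_le_norm _
    have h2 : (z - c).re = z.re - c.re := Complex.sub_re _ _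
    have habs : |z.re - c.re| < c.re := by
      rw [← h2]
      exact lt_of_le_of_lt h1 (lt_of_lt_of_le hz (min_le_left _ _))
    have := abs_lt.mp habs
    show 0 < z.re
    linarith [this.1]
  have stepU : ∀ z : ℂ, 0 < z.re →
      ∀ t : ℕ → ℂ, (∀ j, t j ∈ ball z (min z.re 1 / 2)) → (∀ j, t j ≠ z) →
      Tendsto t atTop (nhds z) → (∀ j, ∃ l, Tendsto (fun N => f N (t j)) atTop (nhds l)) →
      ∃ ρ > (0:ℝ), UniformCauchySeqOn f atTop (closedBall z ρ) := by
    intro z hz t h1 h2 h3 h4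
    have hm : 0 < min z.re 1 := lt_min hz one_pos
    exact ⟨min z.re 1 / 12, by positivity,
      vitali_key f z (min z.re 1) hm (min_le_right _ _)
        (fun N => (holo N).mono (hball z hz))
        (fun N w hw => bdd N w (hball z hz hw)) t h1 h2 h3 h4⟩
  set U : Set ℂ := {z : ℂ | ∃ ρ > (0:ℝ), UniformCauchySeqOn f atTop (closedBall z ρ)}
    with hU_def
  have hU_open : IsOpen U := by
    rw [Metric.isOpen_iff]
    rintro z ⟨ρ, hρ, hz⟩
    refine ⟨ρ / 2, by positivity, fun w hw => ?_⟩
    refine ⟨ρ / 2, by positivity, hz.mono ?_⟩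
    intro y hy
    rw [mem_closedBall] at hy ⊢
    rw [mem_ball] at hw
    calc dist y z ≤ dist y w + dist w z := dist_triangle _ _ _
      _ ≤ ρ / 2 + ρ / 2 := add_le_add hy hw.le
      _ = ρ := by ring
  have h1S : (1:ℂ) ∈ S := by simp [hS_def]
  have h1U : (1:ℂ) ∈ U := by
    set t : ℕ → ℂ := fun j => ((1 + ((j:ℝ) + 3)⁻¹ : ℝ) : ℂ) with ht_def
    have hnorm : ∀ j : ℕ, ‖t j - 1‖ = ((j:ℝ) + 3)⁻¹ := by
      intro j
      have he : t j - 1 = (((((j:ℝ) + 3)⁻¹ : ℝ)) : ℂ) := by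
        rw [ht_def]; push_cast; ring
      rw [he, Complex.norm_real]
      rw [Real.norm_eq_abs, abs_of_pos (by positivity)]
    have hb : ∀ j : ℕ, t j ∈ ball 1 (min (1:ℂ).re 1 / 2) := by
      intro j
      rw [mem_ball, dist_eq_norm, hnorm j]
      have : ((j:ℝ) + 3)⁻¹ ≤ 1 / 3 := by
        rw [inv_le_comm₀ (by positivity) (by norm_num)]
        norm_num
      simp only [Complex.one_re, min_self]
      linarith
    have hne : ∀ j : ℕ, t j ≠ 1 := by
      intro j h
      have hn := hnorm j
      rw [h, sub_self, norm_zero] at hn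
      have hpos : (0:ℝ) < ((j:ℝ) + 3)⁻¹ := by positivity
      linarith
    have hlim : Tendsto t atTop (nhds 1) := by
      have h0 : Tendsto (fun j : ℕ => ((j:ℝ) + 3)⁻¹) atTop (nhds 0) := by
        apply Tendsto.inv_tendsto_atTop
        exact tendsto_atTop_add_const_right atTop 3 tendsto_natCast_atTop_atTop
      have hs : Tendsto (fun j : ℕ => (1 + ((j:ℝ) + 3)⁻¹ : ℝ)) atTop (nhds 1) := by
        simpa using tendsto_const_nhds.add h0
      have := (Complex.continuous_ofReal.tendsto 1).comp hs
      simpa [ht_def, Function.comp, Complex.ofReal_add, Complex.ofReal_inv,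
        Complex.ofReal_one, Function.comp_def] using this
    have hc : ∀ j : ℕ, ∃ l, Tendsto (fun N => f N (t j)) atTop (nhds l) :=
      fun j => ptwise _ (by positivity)
    exact stepU 1 (by norm_num) t hb hne hlim hc
  have hclosure : closure U ∩ S ⊆ U := by
    rintro z ⟨hzc, hzS⟩
    by_cases hzU : z ∈ U
    · exact hzU
    have hz : 0 < z.re := hzS
    have hpick : ∀ j : ℕ, ∃ y, y ∈ U ∧ dist z y < min (min z.re 1 / 2) (((j:ℝ) + 1)⁻¹) := by
      intro j
      apply Metric.mem_closure_iff.mp hzc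
      have : 0 < min z.re 1 / 2 := by positivity
      positivity
    choose y hyU hyd using hpick
    have hyne : ∀ j, y j ≠ z := fun j h => hzU (h ▸ hyU j)
    have hyb : ∀ j, y j ∈ ball z (min z.re 1 / 2) := by
      intro j
      rw [mem_ball, dist_comm]
      exact lt_of_lt_of_le (hyd j) (min_le_left _ _)
    have hyt : Tendsto y atTop (nhds z) := by
      rw [Metric.tendsto_atTop]
      intro ε hε
      obtain ⟨N, hN⟩ := exists_nat_one_div_lt hε
      refine ⟨N, fun n hn => ?_⟩
      have h1 : dist (y n) z < ((n:ℝ) + 1)⁻¹ := by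
        rw [dist_comm]; exact lt_of_lt_of_le (hyd n) (min_le_right _ _)
      have h2 : ((n:ℝ) + 1)⁻¹ ≤ ((N:ℝ) + 1)⁻¹ := by
        apply inv_anti₀ (by positivity)
        have : (N:ℝ) ≤ (n:ℝ) := Nat.cast_le.mpr hn
        linarith
      have h3 : ((N:ℝ) + 1)⁻¹ < ε := by
        rw [← one_div]; exact hN
      linarith
    have hyconv : ∀ j, ∃ l, Tendsto (fun N => f N (y j)) atTop (nhds l) := by
      intro j
      obtain ⟨ρ, hρ, hc⟩ := hyU j
      exact cauchySeq_tendsto_of_complete (vitali_aux_ptwise hc (mem_closedBall_self hρ.le))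
    exact stepU z hz y hyb hyne hyt hyconv
  have hSU : S ⊆ U :=
    ((convex_halfSpace_re_gt 0).isPreconnected).subset_of_closure_inter_subset hU_open
      ⟨1, h1S, h1U⟩ hclosure
  set F : ℂ → ℂ := fun z => limUnder atTop (fun N => f N z) with hF_def
  have hunif : ∀ z ∈ S, ∃ ρ > (0:ℝ), TendstoUniformlyOn f F atTop (closedBall z ρ) := by
    intro z hzS
    obtain ⟨ρ, hρ, hc⟩ := hSU hzS
    refine ⟨ρ, hρ, hc.tendstoUniformlyOn_of_tendsto fun x hx => ?_⟩
    exact (vitali_aux_ptwise hc hx).tendsto_limUnder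
  have hTLU : TendstoLocallyUniformlyOn f F atTop S := by
    intro u hu x hx
    obtain ⟨ρ, hρ, hT⟩ := hunif x hx
    exact ⟨closedBall x ρ, mem_nhdsWithin_of_mem_nhds (closedBall_mem_nhds x hρ), hT u hu⟩
  refine ⟨F, hTLU.differentiableOn (Eventually.of_forall holo) hS_open, ?_⟩
  intro K hK hKc
  exact (tendstoLocallyUniformlyOn_iff_forall_isCompact hS_open).mp hTLU K hK hKc
end
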